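/- For every finite-dimensional poset P, abs(P) ≤ dim(P) − bd-dim(P). -/

import Mathlib

universe u

/-- The order dimension of a poset: the least cardinal `κ` such that the partial
order is the intersection of `κ` linear orderings (each extending it). -/
noncomputable def orderDim (α : Type u) [PartialOrder α] : Cardinal.{u} :=
  sInf {κ : Cardinal.{u} | ∃ (ι : Type u) (r : ι → α → α → Prop),
    (∀ i, IsLinearOrder α (r i)) ∧
    (∀ x y : α, x ≤ y ↔ ∀ i, r i x y) ∧
    Cardinal.mk ι = κ}

/-- The absorbency of a (finite-dimensional) poset `P`: the largest natural
number `n` such that taking the product of `P` with any `n`-tuple of (nonempty)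
chains does not change the dimension. -/
noncomputable def absorb (P : Type u) [PartialOrder P] : ℕ :=
  sSup {n : ℕ | ∀ (T : Fin n → Type u) [∀ i, LinearOrder (T i)] [∀ i, Nonempty (T i)],
    orderDim (P × ∀ i, T i) = orderDim P}

/-- The bounded dimension of a (finite-dimensional) poset `P`: the greatest
natural number `n` such that some bounded subposet of `P` (equivalently, some
nonempty interval `[p, p']`) has dimension `n`. -/
noncomputable def bdDim (P : Type u) [PartialOrder P] : ℕ :=
  sSup {n : ℕ | ∃ p p' : P, p ≤ p' ∧ orderDim ↥(Set.Icc p p') = n}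

set_option linter.unusedSectionVars false
set_option linter.unusedVariables false

namespace Stmt17Aux

open Cardinal

variable {α : Type u} {β : Type u} [PartialOrder α] [PartialOrder β]

/-- The set of cardinals of realizers. -/
def RealSet (α : Type u) [PartialOrder α] : Set Cardinal.{u} :=
  {κ : Cardinal.{u} | ∃ (ι : Type u) (r : ι → α → α → Prop),
    (∀ i, IsLinearOrder α (r i)) ∧
    (∀ x y : α, x ≤ y ↔ ∀ i, r i x y) ∧
    Cardinal.mk ι = κ}

theorem exists_rev {x y : α} (h : ¬ x ≤ y) :
    ∃ s : α → α → Prop, IsLinearOrder α s ∧ (∀ a b : α, a ≤ b → s a b) ∧ ¬ s x y := by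
  set r : α → α → Prop := fun a b => a ≤ b ∨ (a ≤ y ∧ x ≤ b) with hr
  have hpo : IsPartialOrder α r :=
    { refl := fun a => Or.inl (le_refl a)
      trans := by
        rintro a b c (hab | ⟨hay, hxb⟩) (hbc | ⟨hby, hxc⟩)
        · exact Or.inl (hab.trans hbc)
        · exact Or.inr ⟨hab.trans hby, hxc⟩
        · exact Or.inr ⟨hay, hxb.trans hbc⟩
        · exact absurd (hxb.trans hby) h
      antisymm := by
        rintro a b (hab | ⟨hay, hxb⟩) (hba | ⟨hby, hxa⟩)
        · exact le_antisymm hab hba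
        · exact absurd ((hxa.trans hab).trans hby) h
        · exact absurd ((hxb.trans hba).trans hay) h
        · exact absurd (hxa.trans hay) h }
  obtain ⟨s, hs, hrs⟩ := extend_partialOrder r
  refine ⟨s, hs, fun a b hab => hrs _ _ (Or.inl hab), fun hsxy => ?_⟩
  have hsyx : s y x := hrs _ _ (Or.inr ⟨le_refl y, le_refl x⟩)
  have : x = y := by haveI := hs; exact antisymm hsxy hsyx
  exact h (this ▸ le_refl x)

theorem isLinearOrder_pull {γ : Type v} [PartialOrder α] (s : γ → γ → Prop)
    (hs : IsLinearOrder γ s) (g : α → γ) (hg : Function.Injective g) :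
    IsLinearOrder α (fun a b => s (g a) (g b)) :=
  { refl := fun a => hs.refl _
    trans := fun a b c hab hbc => hs.trans _ _ _ hab hbc
    antisymm := fun a b hab hba => hg (hs.antisymm _ _ hab hba)
    total := fun a b => hs.total _ _ }

theorem realSet_nonempty : (RealSet α).Nonempty := by
  refine ⟨_, {s : α → α → Prop // IsLinearOrder α s ∧ ∀ a b : α, a ≤ b → s a b},
    fun i => i.1, fun i => i.2.1, ?_, rfl⟩
  intro x y
  constructor
  · intro h i; exact i.2.2 _ _ h
  · intro h; by_contra hxy
    obtain ⟨s, h1, h2, h3⟩ := exists_rev hxy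
    exact h3 (h ⟨s, h1, h2⟩)

theorem orderDim_mem : orderDim α ∈ RealSet α :=
  csInf_mem realSet_nonempty

theorem orderDim_le {ι : Type u} (r : ι → α → α → Prop)
    (h1 : ∀ i, IsLinearOrder α (r i)) (h2 : ∀ x y : α, x ≤ y ↔ ∀ i, r i x y) :
    orderDim α ≤ Cardinal.mk ι :=
  csInf_le (OrderBot.bddBelow _) ⟨ι, r, h1, h2, rfl⟩

theorem orderDim_le_of_emb (f : α ↪o β) : orderDim α ≤ orderDim β := by
  obtain ⟨ι, r, h1, h2, h3⟩ := orderDim_mem (α := β)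
  rw [← h3]
  refine orderDim_le (fun i a a' => r i (f a) (f a')) (fun i => ?_) (fun x y => ?_)
  · exact isLinearOrder_pull (r i) (h1 i) f f.injective
  · rw [← f.le_iff_le, h2]

theorem one_le_orderDim {x y : α} (h : ¬ x ≤ y) : 1 ≤ orderDim α := by
  rw [Cardinal.one_le_iff_ne_zero]
  intro h0
  obtain ⟨ι, r, h1, h2, h3⟩ := orderDim_mem (α := α)
  rw [h0, Cardinal.mk_eq_zero_iff] at h3
  exact h ((h2 x y).2 (fun i => h3.elim i))

theorem orderDim_subsingleton [Subsingleton α] : orderDim α = 0 := by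
  refine le_antisymm ?_ zero_le
  have := orderDim_le (α := α) (ι := PEmpty.{u+1}) (fun i => i.elim) (fun i => i.elim)
    (fun x y => ⟨fun _ i => i.elim, fun _ => (Subsingleton.elim x y) ▸ le_refl x⟩)
  simpa using this

theorem orderDim_add_le (A B : Type u) [PartialOrder A] [PartialOrder B]
    [BoundedOrder A] [BoundedOrder B] :
    orderDim A + orderDim B ≤ orderDim (A × B) := by
  obtain ⟨ι, r, h1, h2, h3⟩ := orderDim_mem (α := A × B)
  set SA : Set ι := {i | ∃ a a' : A, r i (a, ⊤) (a', ⊥) ∧ ¬ r i (a', ⊥) (a, ⊤)} with hSA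
  set SB : Set ι := {i | ∃ b b' : B, r i (⊤, b) (⊥, b') ∧ ¬ r i (⊥, b') (⊤, b)} with hSB
  have hlin : ∀ (i : ι) (g : A × B → A × B),
      IsLinearOrder _ (fun x y => r i (g x) (g y)) → True := fun _ _ _ => trivial
  -- A realizer indexed by SA
  have hA : orderDim A ≤ Cardinal.mk ↥SA := by
    refine orderDim_le (fun i a a' => r i.1 ((a, ⊥) : A × B) (a', ⊥)) (fun i => ?_)
      (fun x y => ?_)
    · exact isLinearOrder_pull (r i.1) (h1 i.1) (fun a => ((a, ⊥) : A × B))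
        (fun a b hab => (Prod.mk.injEq _ _ _ _ ▸ hab).1)
    · constructor
      · intro hxy i
        exact (h2 _ _).1 (Prod.mk_le_mk.2 ⟨hxy, le_refl _⟩) i.1
      · intro hall
        by_contra hxy
        have hne : ¬ ((x, (⊥ : B)) ≤ ((y, (⊤ : B)) : A × B)) := by
          rw [Prod.mk_le_mk]; exact fun hc => hxy hc.1
        rw [h2] at hne
        push_neg at hne
        obtain ⟨i, hi⟩ := hne
        have hrev : r i ((y, ⊤) : A × B) (x, ⊥) :=
          ((h1 i).total _ _).resolve_left hi
        have hiSA : i ∈ SA := ⟨y, x, hrev, hi⟩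
        have := hall ⟨i, hiSA⟩
        have h2' : r i ((y, (⊥:B)) : A × B) (y, ⊤) :=
          (h2 _ _).1 (Prod.mk_le_mk.2 ⟨le_refl _, bot_le⟩) i
        exact hi ((h1 i).trans _ _ _ this h2')
  have hB : orderDim B ≤ Cardinal.mk ↥SB := by
    refine orderDim_le (fun i b b' => r i.1 (((⊥ : A), b) : A × B) (⊥, b')) (fun i => ?_)
      (fun x y => ?_)
    · exact isLinearOrder_pull (r i.1) (h1 i.1) (fun b => (((⊥ : A), b) : A × B))
        (fun a b hab => (Prod.mk.injEq _ _ _ _ ▸ hab).2)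
    · constructor
      · intro hxy i
        exact (h2 _ _).1 (Prod.mk_le_mk.2 ⟨le_refl _, hxy⟩) i.1
      · intro hall
        by_contra hxy
        have hne : ¬ (((⊥ : A), x) ≤ (((⊤ : A), y) : A × B)) := by
          rw [Prod.mk_le_mk]; exact fun hc => hxy hc.2
        rw [h2] at hne
        push_neg at hne
        obtain ⟨i, hi⟩ := hne
        have hrev : r i ((⊤, y) : A × B) (⊥, x) :=
          ((h1 i).total _ _).resolve_left hi
        have hiSB : i ∈ SB := ⟨y, x, hrev, hi⟩
        have := hall ⟨i, hiSB⟩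
        have h2' : r i (((⊥:A), y) : A × B) (⊤, y) :=
          (h2 _ _).1 (Prod.mk_le_mk.2 ⟨bot_le, le_refl _⟩) i
        exact hi ((h1 i).trans _ _ _ this h2')
  have hdisj : Disjoint SA SB := by
    rw [Set.disjoint_left]
    rintro i ⟨a, a', ha1, ha2⟩ ⟨b, b', hb1, hb2⟩
    apply ha2
    have e1 : r i ((a', ⊥) : A × B) (⊤, b) :=
      (h2 _ _).1 (Prod.mk_le_mk.2 ⟨le_top, bot_le⟩) i
    have e2 : r i ((⊥, b') : A × B) (a, ⊤) :=
      (h2 _ _).1 (Prod.mk_le_mk.2 ⟨bot_le, le_top⟩) i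
    exact (h1 i).trans _ _ _ ((h1 i).trans _ _ _ e1 hb1) e2
  calc orderDim A + orderDim B ≤ Cardinal.mk ↥SA + Cardinal.mk ↥SB := add_le_add hA hB
    _ = Cardinal.mk ↥(SA ∪ SB) := (Cardinal.mk_union_of_disjoint hdisj).symm
    _ ≤ Cardinal.mk ι := Cardinal.mk_set_le _
    _ = orderDim (A × B) := h3

theorem orderDim_le_prod_left (A B : Type u) [PartialOrder A] [PartialOrder B]
    (b₀ : B) : orderDim A ≤ orderDim (A × B) :=
  orderDim_le_of_emb (OrderEmbedding.ofMapLEIff (fun a => ((a, b₀) : A × B))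
    (fun a b => by simp [Prod.mk_le_mk]))

theorem key (A : Type u) [PartialOrder A] [BoundedOrder A]
    (T : Type u) [PartialOrder T] [BoundedOrder T] (hT : ¬ ((⊤ : T) ≤ ⊥)) :
    ∀ n : ℕ, orderDim A + n ≤ orderDim (A × (Fin n → T)) := by
  intro n
  induction n with
  | zero =>
    simpa using orderDim_le_prod_left A (Fin 0 → T) (fun i => i.elim0)
  | succ n ih =>
    have e : ((A × (Fin n → T)) × T) ↪o (A × (Fin (n + 1) → T)) := by
      refine OrderEmbedding.ofMapLEIff
        (fun p => ((p.1.1, Fin.snoc p.1.2 p.2) : A × (Fin (n + 1) → T))) ?_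
      rintro ⟨⟨a, f⟩, t⟩ ⟨⟨a', f'⟩, t'⟩
      simp only [Prod.mk_le_mk, Pi.le_def]
      constructor
      · rintro ⟨ha, hf⟩
        refine ⟨⟨ha, fun i => ?_⟩, ?_⟩
        · have := hf i.castSucc
          simpa [Fin.snoc_castSucc] using this
        · have := hf (Fin.last n)
          simpa [Fin.snoc_last] using this
      · rintro ⟨⟨ha, hf⟩, ht⟩
        refine ⟨ha, fun i => ?_⟩
        induction i using Fin.lastCases with
        | last => simpa [Fin.snoc_last] using ht
        | cast i => simpa [Fin.snoc_castSucc] using hf i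
    have h1 : 1 ≤ orderDim T := one_le_orderDim hT
    have h2 := orderDim_add_le (A × (Fin n → T)) T
    have h3 := orderDim_le_of_emb e
    calc orderDim A + ((n + 1 : ℕ) : Cardinal.{u})
        = (orderDim A + n) + 1 := by push_cast; ring
      _ ≤ orderDim (A × (Fin n → T)) + orderDim T := add_le_add ih h1
      _ ≤ orderDim ((A × (Fin n → T)) × T) := h2
      _ ≤ orderDim (A × (Fin (n + 1) → T)) := h3

end Stmt17Aux

open Stmt17Aux in
theorem stmt17' (P : Type u) [PartialOrder P] [Nonempty P]
    (dP : ℕ) (hdP : orderDim P = dP) :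
    (sSup {n : ℕ | ∀ (T : Fin n → Type u) [∀ i, LinearOrder (T i)] [∀ i, Nonempty (T i)],
      orderDim (P × ∀ i, T i) = orderDim P}) ≤
    dP - sSup {n : ℕ | ∃ p p' : P, p ≤ p' ∧ orderDim ↥(Set.Icc p p') = n} := by
  classical
  set bdSet : Set ℕ := {n : ℕ | ∃ p p' : P, p ≤ p' ∧ orderDim ↥(Set.Icc p p') = n} with hbdSet
  -- every interval embeds in P
  have hIccle : ∀ p p' : P, orderDim ↥(Set.Icc p p') ≤ orderDim P := fun p p' =>
    orderDim_le_of_emb (OrderEmbedding.subtype _)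
  have hbd_ne : bdSet.Nonempty := by
    obtain ⟨p⟩ := ‹Nonempty P›
    refine ⟨0, p, p, le_refl p, ?_⟩
    haveI : Subsingleton ↥(Set.Icc p p) := by
      constructor
      rintro ⟨x, hx1, hx2⟩ ⟨y, hy1, hy2⟩
      have : x = y := le_antisymm (hx2.trans hy1) (hy2.trans hx1)
      exact Subtype.ext this
    simpa using orderDim_subsingleton (α := ↥(Set.Icc p p))
  have hbd_bdd : BddAbove bdSet := by
    refine ⟨dP, ?_⟩
    rintro n ⟨p, p', hle, hn⟩
    have := hIccle p p'
    rw [hn, hdP] at this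
    exact_mod_cast this
  obtain ⟨p, p', hpp', hb⟩ := Nat.sSup_mem hbd_ne hbd_bdd
  set b := sSup bdSet with hb'
  -- absorb side
  rcases Set.eq_empty_or_nonempty {n : ℕ | ∀ (T : Fin n → Type u) [∀ i, LinearOrder (T i)]
      [∀ i, Nonempty (T i)], orderDim (P × ∀ i, T i) = orderDim P} with hemp | hne
  · rw [hemp, csSup_empty]
    exact Nat.zero_le _
  · refine csSup_le hne ?_
    intro n hn
    have hT := hn (fun _ => ULift.{u} (Fin 2))
    haveI : BoundedOrder ↥(Set.Icc p p') :=
      { top := ⟨p', ⟨hpp', le_refl p'⟩⟩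
        le_top := fun x => x.2.2
        bot := ⟨p, ⟨le_refl p, hpp'⟩⟩
        bot_le := fun x => x.2.1 }
    have hkey := key ↥(Set.Icc p p') (ULift.{u} (Fin 2)) (by decide) n
    have hemb : (↥(Set.Icc p p') × (Fin n → ULift.{u} (Fin 2))) ↪o
        (P × (Fin n → ULift.{u} (Fin 2))) := by
      refine OrderEmbedding.ofMapLEIff (fun q => ((q.1 : P), q.2)) ?_
      rintro ⟨a, f⟩ ⟨a', f'⟩
      simp [Prod.mk_le_mk]
    have hchain : ((b : Cardinal.{u}) + n) ≤ (dP : Cardinal.{u}) := by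
      calc (b : Cardinal.{u}) + n = orderDim ↥(Set.Icc p p') + n := by rw [hb]
        _ ≤ orderDim (↥(Set.Icc p p') × (Fin n → ULift.{u} (Fin 2))) := hkey
        _ ≤ orderDim (P × (Fin n → ULift.{u} (Fin 2))) := orderDim_le_of_emb hemb
        _ = orderDim P := hT
        _ = dP := hdP
    have : b + n ≤ dP := by exact_mod_cast hchain
    omega


theorem stmt17 (P : Type u) [PartialOrder P] [Nonempty P]
    (dP : ℕ) (hdP : orderDim P = dP) :
    absorb P ≤ dP - bdDim P := by
  unfold absorb bdDim
  exact stmt17' P dP hdP
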